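/- (Stieltjes inversion) If μ is a probability measure on ℝ whose distribution function has a continuous density f^μ at λ, then f^μ(λ) = lim_{ω → 0⁺} (1/π) Im[m_μ(λ + iω)], where m_μ is the Stieltjes transform of μ. -/

import Mathlib

open MeasureTheory
open scoped ENNReal NNReal

open Filter

namespace StieltjesInversionAux

open Filter Set ENNReal Real

lemma exists_meas_density (F : ℝ → ℝ≥0∞) (μ : Measure ℝ) [IsProbabilityMeasure μ]
    (hμ : μ = volume.withDensity F) :
    ∃ g : ℝ → ℝ≥0∞, Measurable g ∧ g ≤ F ∧ μ = volume.withDensity g := by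
  obtain ⟨g, gmeas, gle, geq⟩ := exists_measurable_le_lintegral_eq volume F
  refine ⟨g, gmeas, gle, ?_⟩
  have htot : ∫⁻ a, F a = 1 := by
    have := measure_univ (μ := μ)
    rwa [hμ, withDensity_apply _ MeasurableSet.univ, setLIntegral_univ] at this
  refine Measure.ext fun s hs => ?_
  rw [hμ, withDensity_apply _ hs, withDensity_apply _ hs]
  have h1 : ∫⁻ a in s, g a ≤ ∫⁻ a in s, F a := lintegral_mono gle
  have h2 : ∫⁻ a in sᶜ, g a ≤ ∫⁻ a in sᶜ, F a := lintegral_mono gle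
  have hsum : (∫⁻ a in s, F a) + ∫⁻ a in sᶜ, F a = (∫⁻ a in s, g a) + ∫⁻ a in sᶜ, g a := by
    rw [lintegral_add_compl F hs (μ := volume), lintegral_add_compl g hs (μ := volume), htot,
      ← geq, htot]
  have hfin : ∫⁻ a in sᶜ, F a ≠ ⊤ := by
    refine ne_of_lt (lt_of_le_of_lt ?_ (by simp [htot] : ∫⁻ a, F a < ⊤))
    exact lintegral_mono' Measure.restrict_le_self le_rfl
  refine le_antisymm ?_ h1
  by_contra hlt
  push_neg at hlt
  have : (∫⁻ a in s, g a) + ∫⁻ a in sᶜ, g a < (∫⁻ a in s, F a) + ∫⁻ a in sᶜ, F a :=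
    ENNReal.add_lt_add_of_lt_of_le (h2.trans_lt hfin.lt_top).ne hlt h2
  exact ne_of_lt this hsum.symm

lemma ae_lower (g F : ℝ → ℝ≥0∞) (gmeas : Measurable g)
    (heq : ∀ s : Set ℝ, MeasurableSet s → ∫⁻ a in s, g a = ∫⁻ a in s, F a)
    (c δ x₀ : ℝ) (hF : ∀ x, dist x x₀ < δ → ENNReal.ofReal c ≤ F x) :
    ∀ᵐ x, dist x x₀ < δ → ENNReal.ofReal c ≤ g x := by
  rcases le_or_gt c 0 with hc | hc
  · filter_upwards with x _
    simp [ENNReal.ofReal_eq_zero.2 hc]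
  set B : Set ℝ := Metric.ball x₀ δ with hB
  have hBmeas : MeasurableSet B := Metric.isOpen_ball.measurableSet
  have hBfin : volume B ≠ ⊤ := (measure_ball_lt_top).ne
  set S : ℕ → Set ℝ := fun k => B ∩ {x | g x ≤ ENNReal.ofReal (c - 1 / (k + 1))} with hS
  have hSmeas : ∀ k, MeasurableSet (S k) := fun k =>
    hBmeas.inter (gmeas measurableSet_Iic)
  have hSnull : ∀ k, volume (S k) = 0 := by
    intro k
    by_contra hv
    have hfin : volume (S k) ≠ ⊤ :=
      (lt_of_le_of_lt (measure_mono inter_subset_left) hBfin.lt_top).ne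
    have hup : ∫⁻ a in S k, g a ≤ ENNReal.ofReal (c - 1 / (k + 1)) * volume (S k) := by
      calc ∫⁻ a in S k, g a ≤ ∫⁻ _ in S k, ENNReal.ofReal (c - 1 / (k + 1)) :=
            setLIntegral_mono' (hSmeas k) fun x hx => hx.2
        _ = ENNReal.ofReal (c - 1 / (k + 1)) * volume (S k) := by
            rw [setLIntegral_const]
    have hlow : ENNReal.ofReal c * volume (S k) ≤ ∫⁻ a in S k, F a := by
      calc ENNReal.ofReal c * volume (S k) = ∫⁻ _ in S k, ENNReal.ofReal c := by
            rw [setLIntegral_const]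
        _ ≤ ∫⁻ a in S k, F a :=
            setLIntegral_mono' (hSmeas k) fun x hx =>
              hF x (by simpa [hB, Metric.mem_ball] using hx.1)
    rw [← heq _ (hSmeas k)] at hlow
    have : ENNReal.ofReal c * volume (S k) ≤ ENNReal.ofReal (c - 1 / (k + 1)) * volume (S k) :=
      hlow.trans hup
    have hlt : ENNReal.ofReal (c - 1 / (k + 1)) < ENNReal.ofReal c := by
      apply ENNReal.ofReal_lt_ofReal_iff hc |>.2
      have : (0:ℝ) < 1 / (k + 1) := by positivity
      linarith
    exact absurd this (not_le.2 ((ENNReal.mul_lt_mul_iff_left hv hfin).2 hlt))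
  have hnull : volume (B ∩ {x | g x < ENNReal.ofReal c}) = 0 := by
    refine measure_mono_null ?_ ((measure_iUnion_null_iff).2 hSnull)
    rintro x ⟨hxB, hxg⟩
    have hgfin : g x ≠ ⊤ := hxg.ne_top
    have hr : (g x).toReal < c := by
      have := ENNReal.toReal_strict_mono (by simp) hxg
      simpa [ENNReal.toReal_ofReal hc.le] using this
    obtain ⟨k, hk⟩ := exists_nat_one_div_lt (show (0:ℝ) < c - (g x).toReal by linarith)
    refine mem_iUnion.2 ⟨k, hxB, ?_⟩
    show g x ≤ ENNReal.ofReal (c - 1 / (k + 1))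
    calc g x = ENNReal.ofReal ((g x).toReal) := (ENNReal.ofReal_toReal hgfin).symm
      _ ≤ ENNReal.ofReal (c - 1 / (k + 1)) := by
          apply ENNReal.ofReal_le_ofReal
          linarith
  have hnull2 : volume {x : ℝ | ¬ (dist x x₀ < δ → ENNReal.ofReal c ≤ g x)} = 0 := by
    apply measure_mono_null _ hnull
    intro x hx
    rw [mem_setOf_eq] at hx; rw [Classical.not_imp] at hx
    exact ⟨Metric.mem_ball.2 hx.1, not_le.1 hx.2⟩
  exact ae_iff.2 hnull2

lemma integral_poisson (x₀ : ℝ) {ω : ℝ} (hω : 0 < ω) :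
    ∫ x in Icc (x₀-1) (x₀+1), (1/Real.pi) * (ω / ((x - x₀)^2 + ω^2)) =
      2/Real.pi * Real.arctan (1/ω) := by
  have h1 : (x₀ - 1 : ℝ) ≤ x₀ + 1 := by linarith
  rw [integral_Icc_eq_integral_Ioc, ← intervalIntegral.integral_of_le h1,
    intervalIntegral.integral_const_mul]
  have h2 : (∫ x in (x₀-1)..(x₀+1), ω / ((x - x₀)^2 + ω^2)) = 2 * Real.arctan (1/ω) := by
    have e1 : (∫ x in (x₀-1)..(x₀+1), ω / ((x - x₀)^2 + ω^2))
        = ∫ u in (-1:ℝ)..1, ω / (u^2 + ω^2) := by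
      have := intervalIntegral.integral_comp_sub_right (a := x₀-1) (b := x₀+1)
        (fun u => ω / (u^2 + ω^2)) x₀
      simpa using this
    have e2 : (∫ u in (-1:ℝ)..1, ω / (u^2 + ω^2))
        = ω⁻¹ * ∫ u in (-1:ℝ)..1, (1 + (u/ω)^2)⁻¹ := by
      rw [← intervalIntegral.integral_const_mul]
      refine intervalIntegral.integral_congr fun u _ => ?_
      rw [div_pow]
      rw [show (1 + u^2/ω^2) = (ω^2 + u^2)/ω^2 by field_simp]
      rw [inv_div]
      field_simp
      ring
    have e3 : (∫ u in (-1:ℝ)..1, (1 + (u/ω)^2)⁻¹)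
        = ω * ∫ v in (-1/ω)..(1/ω), (1 + v^2)⁻¹ := by
      have := intervalIntegral.integral_comp_div (a := (-1:ℝ)) (b := 1)
        (fun v => (1 + v^2)⁻¹) hω.ne'
      simpa [smul_eq_mul] using this
    have e4 : (∫ v in (-1/ω)..(1/ω), ((1:ℝ) + v^2)⁻¹) = 2 * Real.arctan (1/ω) := by
      rw [integral_inv_one_add_sq]
      rw [show (-1/ω : ℝ) = -(1/ω) by ring, Real.arctan_neg]
      ring
    rw [e1, e2, e3, e4]
    field_simp
  rw [h2]
  ring

lemma tendsto_poisson_int (x₀ : ℝ) :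
    Tendsto (fun ω : ℝ => ∫ x in Icc (x₀-1) (x₀+1), (1/Real.pi) * (ω / ((x - x₀)^2 + ω^2)))
      (nhdsWithin 0 (Set.Ioi 0)) (nhds 1) := by
  have h1 : Tendsto (fun ω : ℝ => 1/ω) (nhdsWithin 0 (Set.Ioi 0)) atTop := by
    simpa [one_div] using (tendsto_inv_nhdsGT_zero : Tendsto (fun x : ℝ => x⁻¹) _ _)
  have h2 := (Real.tendsto_arctan_atTop.mono_right nhdsWithin_le_nhds).comp h1
  have h3 := h2.const_mul (2/Real.pi)
  have h4 : 2/Real.pi * (Real.pi/2) = 1 := by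
    field_simp
  rw [h4] at h3
  refine h3.congr' ?_
  filter_upwards [self_mem_nhdsWithin] with ω hω
  exact (integral_poisson x₀ (by exact hω)).symm

lemma poisson_unif (x₀ : ℝ) (u : Set ℝ) (hu : IsOpen u) (hx : x₀ ∈ u) :
    TendstoUniformlyOn (fun (ω : ℝ) (x : ℝ) => (1/Real.pi) * (ω / ((x - x₀)^2 + ω^2))) 0
      (nhdsWithin 0 (Set.Ioi 0)) uᶜ := by
  obtain ⟨δ, hδ, hball⟩ := Metric.isOpen_iff.1 hu x₀ hx
  rw [Metric.tendstoUniformlyOn_iff]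
  intro ε hε
  have hmem : Set.Ioo (0:ℝ) (Real.pi * δ^2 * ε) ∈ nhdsWithin (0:ℝ) (Set.Ioi 0) := by
    exact Ioo_mem_nhdsGT_of_mem ⟨le_rfl, by positivity⟩
  filter_upwards [hmem] with ω hω x hxu
  have hω0 : 0 < ω := hω.1
  have hxd : δ ≤ dist x x₀ := by
    by_contra hlt
    exact hxu (hball (Metric.mem_ball.2 (not_le.1 hlt)))
  have hd2 : δ^2 ≤ (x - x₀)^2 := by
    rw [Real.dist_eq] at hxd
    calc δ^2 ≤ |x - x₀|^2 := by
          apply pow_le_pow_left₀ hδ.le hxd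
      _ = (x - x₀)^2 := sq_abs _
  have hden : (0:ℝ) < (x - x₀)^2 + ω^2 := by positivity
  have hφ : (1/Real.pi) * (ω / ((x - x₀)^2 + ω^2)) ≤ ω / (Real.pi * δ^2) := by
    have e : (1/Real.pi) * (ω / ((x - x₀)^2 + ω^2)) = ω / (Real.pi * ((x - x₀)^2 + ω^2)) := by
      field_simp
    rw [e]
    apply div_le_div_of_nonneg_left hω0.le (by positivity)
    have : Real.pi * δ^2 ≤ Real.pi * ((x - x₀)^2 + ω^2) := by
      nlinarith [Real.pi_pos]
    exact this
  have hφ0 : 0 ≤ (1/Real.pi) * (ω / ((x - x₀)^2 + ω^2)) := by positivity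
  simp only [Pi.zero_apply]
  rw [Real.dist_eq, abs_sub_comm, sub_zero, abs_of_nonneg hφ0]
  calc (1/Real.pi) * (ω / ((x - x₀)^2 + ω^2)) ≤ ω / (Real.pi * δ^2) := hφ
    _ < ε := by
        rw [div_lt_iff₀ (by positivity)]
        calc ω < Real.pi * δ^2 * ε := hω.2
          _ = ε * (Real.pi * δ^2) := by ring

lemma le_toReal_iInf {c : ℕ → ℝ≥0∞} (hc : ∀ n, c n ≠ ⊤) (r : ℝ) (h : ∀ n, r ≤ (c n).toReal) :
    r ≤ (⨅ n, c n).toReal := by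
  rcases le_or_gt r 0 with h0 | h0
  · exact h0.trans ENNReal.toReal_nonneg
  · have hle : ENNReal.ofReal r ≤ ⨅ n, c n :=
      le_iInf fun n => ENNReal.ofReal_le_of_le_toReal (h n)
    have hfin : (⨅ n, c n) ≠ ⊤ := (lt_of_le_of_lt (iInf_le _ 0) (hc 0).lt_top).ne
    calc r = (ENNReal.ofReal r).toReal := (ENNReal.toReal_ofReal h0.le).symm
      _ ≤ _ := ENNReal.toReal_mono hfin hle

end StieltjesInversionAux

/-- Stieltjes inversion: if the probability measure `μ` on `ℝ` has a
density `f` which is continuous at `x₀`, then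
`f(x₀) = lim_{ω → 0⁺} (1/π) · Im m_μ(x₀ + iω)`. -/
theorem stieltjes_inversion
    (f : ℝ → ℝ) (hf : ∀ x, 0 ≤ f x)
    (μ : Measure ℝ) [IsProbabilityMeasure μ]
    (hμ : μ = volume.withDensity (fun x => ENNReal.ofReal (f x)))
    (x₀ : ℝ) (hcont : ContinuousAt f x₀) :
    Filter.Tendsto
      (fun ω : ℝ =>
        (1 / Real.pi) * (∫ t, 1 / ((t : ℂ) - ((x₀ : ℂ) + ω * Complex.I)) ∂μ).im)
      (nhdsWithin 0 (Set.Ioi 0)) (nhds (f x₀)) := by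
  classical
  obtain ⟨g, gmeas, gle, hgμ⟩ := StieltjesInversionAux.exists_meas_density
      (fun x => ENNReal.ofReal (f x)) μ hμ
  have gfin : ∀ x, g x ≠ ⊤ := fun x => (lt_of_le_of_lt (gle x) ENNReal.ofReal_lt_top).ne
  have gleR : ∀ x, (g x).toReal ≤ f x := fun x => by
    have := ENNReal.toReal_mono ENNReal.ofReal_ne_top (gle x)
    rwa [ENNReal.toReal_ofReal (hf x)] at this
  have heq : ∀ s : Set ℝ, MeasurableSet s →
      ∫⁻ a in s, g a = ∫⁻ a in s, ENNReal.ofReal (f a) := by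
    intro s hs
    rw [← withDensity_apply _ hs, ← withDensity_apply _ hs, ← hgμ, ← hμ]
  have hδs' : ∀ n : ℕ, ∃ δ : ℝ, 0 < δ ∧ ∀ t, dist t x₀ < δ → |f t - f x₀| < 1/(n+1) := by
    intro n
    obtain ⟨δ, hδ, hd⟩ := Metric.continuousAt_iff.1 hcont (1/(n+1)) (by positivity)
    exact ⟨δ, hδ, fun t ht => by simpa [Real.dist_eq] using hd ht⟩
  choose δs hδs hfδ using hδs'
  have A : ∀ n : ℕ, ∀ᵐ x, dist x x₀ < δs n → f x₀ - 1/(n+1) ≤ (g x).toReal := by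
    intro n
    have hF : ∀ x, dist x x₀ < δs n →
        ENNReal.ofReal (f x₀ - 1/(n+1)) ≤ ENNReal.ofReal (f x) := by
      intro x hd
      apply ENNReal.ofReal_le_ofReal
      have h2 := abs_lt.1 (hfδ n x hd)
      linarith [h2.1]
    have := StieltjesInversionAux.ae_lower g _ gmeas heq (f x₀ - 1/(n+1)) (δs n) x₀ hF
    filter_upwards [this] with x hx hd
    have := hx hd
    rwa [ENNReal.ofReal_le_iff_le_toReal (gfin x)] at this
  set cE : ℕ → ℝ → ℝ≥0∞ := fun n x =>
    if dist x x₀ < δs n then ENNReal.ofReal (1/(n+1)) else 1 with hcE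
  have cEfin : ∀ n x, cE n x ≠ ⊤ := by
    intro n x; rw [hcE]; dsimp only
    split <;> simp
  set b : ℝ → ℝ := fun x => (⨅ n, cE n x).toReal with hb
  have bnonneg : ∀ x, 0 ≤ b x := fun x => ENNReal.toReal_nonneg
  have ballmeas : ∀ n, MeasurableSet {x : ℝ | dist x x₀ < δs n} := by
    intro n
    exact measurableSet_lt ((measurable_id.dist measurable_const)) measurable_const
  have bmeas : Measurable b := by
    apply Measurable.ennreal_toReal
    apply Measurable.iInf
    intro n
    rw [hcE]; dsimp only
    exact Measurable.ite (ballmeas n) measurable_const measurable_const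
  have hble : ∀ n x, dist x x₀ < δs n → b x ≤ 1/(n+1) := by
    intro n x hd
    rw [hb]; dsimp only
    have h1 : (⨅ m, cE m x) ≤ cE n x := iInf_le _ n
    have h2 : cE n x = ENNReal.ofReal (1/(n+1)) := by rw [hcE]; simp [hd]
    calc (⨅ m, cE m x).toReal ≤ (ENNReal.ofReal (1/(n+1))).toReal :=
        ENNReal.toReal_mono (by simp) (h2 ▸ h1)
      _ = 1/(n+1) := ENNReal.toReal_ofReal (by positivity)
  have hbtendsto : Tendsto b (nhds x₀) (nhds 0) := by
    rw [Metric.tendsto_nhds]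
    intro ε hε
    obtain ⟨n, hn⟩ := exists_nat_one_div_lt hε
    filter_upwards [Metric.ball_mem_nhds x₀ (hδs n)] with x hx
    rw [Real.dist_eq, sub_zero, abs_of_nonneg (bnonneg x)]
    exact lt_of_le_of_lt (hble n x (Metric.mem_ball.1 hx)) hn
  have hkey : ∀ n x, dist x x₀ < δs n → (g x).toReal ≤ f x₀ + 1/(n+1) := fun n x hd => by
    have h2 := abs_lt.1 (hfδ n x hd)
    linarith [gleR x, h2.2]
  set g' : ℝ → ℝ := fun x =>
    if dist x x₀ < δs 0 then
      max (f x₀ - b x) (min ((g x).toReal) (f x₀ + b x))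
    else (g x).toReal with hg'
  have g'meas : Measurable g' := by
    exact Measurable.ite (ballmeas 0)
      ((measurable_const.sub bmeas).max ((gmeas.ennreal_toReal).min (measurable_const.add bmeas)))
      gmeas.ennreal_toReal
  have g'bound : ∀ x, dist x x₀ < δs 0 → |g' x - f x₀| ≤ b x := by
    intro x hd
    rw [hg']; dsimp only; rw [if_pos hd]
    have h1 : f x₀ - b x ≤ max (f x₀ - b x) (min ((g x).toReal) (f x₀ + b x)) := le_max_left _ _
    have h2 : max (f x₀ - b x) (min ((g x).toReal) (f x₀ + b x)) ≤ f x₀ + b x :=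
      max_le (by linarith [bnonneg x]) (min_le_right _ _)
    rw [abs_le]; constructor <;> linarith
  have hg'tendsto : Tendsto g' (nhds x₀) (nhds (f x₀)) := by
    rw [tendsto_iff_dist_tendsto_zero]
    apply squeeze_zero' (.of_forall fun x => dist_nonneg) ?_ hbtendsto
    filter_upwards [Metric.ball_mem_nhds x₀ (hδs 0)] with x hx
    rw [Real.dist_eq]
    exact g'bound x (Metric.mem_ball.1 hx)
  have hone : (1:ℝ)/((0:ℕ)+1) = 1 := by norm_num
  have hae : g' =ᵐ[volume] fun x => (g x).toReal := by
    filter_upwards [ae_all_iff.2 A] with x hx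
    rw [hg']; dsimp only
    by_cases hd : dist x x₀ < δs 0
    · rw [if_pos hd]
      have hup : (g x).toReal - f x₀ ≤ b x := by
        apply StieltjesInversionAux.le_toReal_iInf (fun n => cEfin n x)
        intro n
        by_cases hdn : dist x x₀ < δs n
        · have h3 := hkey n x hdn
          have hc : cE n x = ENNReal.ofReal (1/(n+1)) := by rw [hcE]; simp [hdn]
          rw [hc, ENNReal.toReal_ofReal (by positivity)]
          linarith
        · have hc : cE n x = 1 := by rw [hcE]; simp [hdn]
          rw [hc, ENNReal.toReal_one]
          have h3 := hkey 0 x hd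
          rw [hone] at h3
          linarith
      have hlo : f x₀ - (g x).toReal ≤ b x := by
        apply StieltjesInversionAux.le_toReal_iInf (fun n => cEfin n x)
        intro n
        by_cases hdn : dist x x₀ < δs n
        · have h3 := hx n hdn
          have hc : cE n x = ENNReal.ofReal (1/(n+1)) := by rw [hcE]; simp [hdn]
          rw [hc, ENNReal.toReal_ofReal (by positivity)]
          linarith
        · have hc : cE n x = 1 := by rw [hcE]; simp [hdn]
          rw [hc, ENNReal.toReal_one]
          have h3 := hx 0 hd
          rw [hone] at h3
          linarith
      rw [min_eq_left (by linarith), max_eq_right (by linarith)]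
    · rw [if_neg hd]
  have htotg : ∫⁻ a, g a = 1 := by
    have := measure_univ (μ := μ)
    rwa [hgμ, withDensity_apply _ MeasurableSet.univ, setLIntegral_univ] at this
  have hint : Integrable (fun x => (g x).toReal) volume :=
    integrable_toReal_of_lintegral_ne_top gmeas.aemeasurable (by rw [htotg]; simp)
  have hg'int : Integrable g' volume := hint.congr hae.symm
  set φ : ℝ → ℝ → ℝ := fun ω x => (1/Real.pi) * (ω / ((x - x₀)^2 + ω^2)) with hφdef
  have φmeas : ∀ ω : ℝ, Measurable (φ ω) := by
    intro ω
    apply Measurable.const_mul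
    exact measurable_const.div (((measurable_id.sub_const x₀).pow_const 2).add_const _)
  have main : Tendsto (fun ω => ∫ x, φ ω x • g' x) (nhdsWithin 0 (Set.Ioi 0))
      (nhds (f x₀)) := by
    apply tendsto_integral_peak_smul_of_integrable_of_tendsto
      (t := Set.Icc (x₀-1) (x₀+1)) measurableSet_Icc
      (Icc_mem_nhds (by linarith) (by linarith))
      (by rw [Real.volume_Icc]; exact ENNReal.ofReal_ne_top)
      ?_ ?_ ?_ ?_ hg'int hg'tendsto
    · filter_upwards [self_mem_nhdsWithin] with ω (hω : 0 < ω) x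
      rw [hφdef]; dsimp only
      have h0 : (0:ℝ) < (x - x₀)^2 + ω^2 := by positivity
      positivity
    · exact fun u hu hxu => StieltjesInversionAux.poisson_unif x₀ u hu hxu
    · exact StieltjesInversionAux.tendsto_poisson_int x₀
    · exact Filter.Eventually.of_forall fun ω => (φmeas ω).aestronglyMeasurable
  have hcongr : ∀ ω : ℝ, (∫ x, φ ω x • g' x) = ∫ x, φ ω x * (g x).toReal := by
    intro ω
    apply integral_congr_ae
    filter_upwards [hae] with x hx
    rw [smul_eq_mul, hx]
  have hfinal : ∀ ω : ℝ, 0 < ω →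
      (1 / Real.pi) * (∫ t, 1 / ((t : ℂ) - ((x₀ : ℂ) + ω * Complex.I)) ∂μ).im
        = ∫ x, φ ω x * (g x).toReal := by
    intro ω hω
    set z : ℂ := (x₀ : ℂ) + ω * Complex.I with hz
    have hre : ∀ t : ℝ, ((t:ℂ) - z).re = t - x₀ := by intro t; simp [hz]
    have him : ∀ t : ℝ, ((t:ℂ) - z).im = -ω := by intro t; simp [hz]
    have hne : ∀ t : ℝ, (t:ℂ) - z ≠ 0 := by
      intro t h
      have h2 := him t
      rw [h] at h2
      simp at h2
      linarith
    have hptim : ∀ t : ℝ, (1 / ((t:ℂ) - z)).im = ω / ((t - x₀)^2 + ω^2) := by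
      intro t
      rw [one_div, Complex.inv_im, him t, Complex.normSq_apply, hre t, him t, neg_neg]
      ring_nf
    have hcont' : Continuous fun t : ℝ => 1 / ((t:ℂ) - z) := by
      apply continuous_const.div
      · exact Complex.continuous_ofReal.sub continuous_const
      · exact hne
    have hbound : ∀ t : ℝ, ‖1 / ((t:ℂ) - z)‖ ≤ 1/ω := by
      intro t
      rw [norm_div, norm_one]
      apply div_le_div_of_nonneg_left zero_le_one hω
      calc ω = |((t:ℂ) - z).im| := by rw [him t]; rw [abs_neg, abs_of_pos hω]
        _ ≤ ‖(t:ℂ) - z‖ := Complex.abs_im_le_norm _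
        _ = ‖(t:ℂ) - z‖ := rfl
    have hμint : Integrable (fun t : ℝ => 1 / ((t:ℂ) - z)) μ :=
      Integrable.mono' (integrable_const (1/ω)) hcont'.aestronglyMeasurable
        (Filter.Eventually.of_forall hbound)
    have him2 : (∫ t, 1 / ((t:ℂ) - z) ∂μ).im = ∫ t, (1 / ((t:ℂ) - z)).im ∂μ := by
      have h3 := Complex.imCLM.integral_comp_comm hμint
      simpa using h3.symm
    rw [him2]
    have haux : (∫ t, (1 / ((t:ℂ) - z)).im ∂μ) = ∫ t, ω / ((t - x₀)^2 + ω^2) ∂μ := by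
      congr 1
      funext t
      exact hptim t
    rw [haux]
    set g₂ : ℝ → ℝ≥0 := fun x => (g x).toNNReal with hg₂
    have hg₂meas : Measurable g₂ := gmeas.ennreal_toNNReal
    have hgg₂ : (fun x => (g₂ x : ℝ≥0∞)) = g := funext fun x => ENNReal.coe_toNNReal (gfin x)
    have hμ2 : μ = volume.withDensity (fun x => (g₂ x : ℝ≥0∞)) := by rw [hgg₂]; exact hgμ
    rw [hμ2, integral_withDensity_eq_integral_smul hg₂meas]
    rw [← integral_const_mul]
    congr 1
    funext x
    rw [NNReal.smul_def, smul_eq_mul]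
    have : (g₂ x : ℝ) = (g x).toReal := rfl
    rw [this, hφdef]
    ring
  apply main.congr'
  filter_upwards [self_mem_nhdsWithin] with ω (hω : 0 < ω)
  exact (hcongr ω).trans (hfinal ω hω).symm
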